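/- The function F(t) = ∫₀ᵗ 2^{3j/2} e^{−c2^{2j}(t−t')} t'^{−1/2} dt' satisfies ‖F‖_{L⁴(ℝ⁺)} ≲ 1 uniformly in j ∈ ℤ. -/

import Mathlib

open Real MeasureTheory Set

lemma rpow_neg_half (x : ℝ) (hx : 0 < x) : x ^ (-(1:ℝ)/2) = (Real.sqrt x)⁻¹ := by
  rw [show (-(1:ℝ)/2) = -(1/2) by ring, Real.rpow_neg hx.le, Real.sqrt_eq_rpow]

lemma integrableOn_rpow_neg_half (t : ℝ) (ht : 0 < t) :
    IntegrableOn (fun x : ℝ => x ^ (-(1:ℝ)/2)) (Ioo 0 t) := by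
  have h : IntervalIntegrable (fun x : ℝ => x ^ (-(1:ℝ)/2)) volume 0 t :=
    intervalIntegral.intervalIntegrable_rpow' (by norm_num)
  have := (intervalIntegrable_iff_integrableOn_Ioo_of_le ht.le).mp h
  exact this

lemma integral_rpow_neg_half (t : ℝ) (ht : 0 < t) :
    ∫ x in Ioo (0:ℝ) t, x ^ (-(1:ℝ)/2) = 2 * Real.sqrt t := by
  rw [← MeasureTheory.integral_Ioc_eq_integral_Ioo,
    ← intervalIntegral.integral_of_le ht.le,
    integral_rpow (Or.inl (by norm_num))]
  rw [Real.zero_rpow (by norm_num)]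
  rw [show (-(1:ℝ)/2 + 1) = (1/2 : ℝ) by ring, ← Real.sqrt_eq_rpow]
  ring

section Inner
variable {p a t : ℝ}

lemma inner_nonneg (hp : 0 < p) :
    0 ≤ ∫ t' in Ioo (0:ℝ) t, p * Real.exp (-(a*(t-t'))) * t' ^ (-(1:ℝ)/2) := by
  apply setIntegral_nonneg measurableSet_Ioo
  intro x hx
  have := Real.rpow_nonneg hx.1.le (-(1:ℝ)/2)
  positivity

lemma inner_cont (hp : 0 < p) (ht : 0 < t) :
    ContinuousOn (fun t' => p * Real.exp (-(a*(t-t'))) * t' ^ (-(1:ℝ)/2)) (Ioo 0 t) := by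
  apply ContinuousOn.mul
  · exact (by fun_prop : Continuous fun t' : ℝ => p * Real.exp (-(a*(t-t')))).continuousOn
  · intro x hx
    exact (Real.continuousAt_rpow_const x _ (Or.inl hx.1.ne')).continuousWithinAt

lemma inner_integrable (hp : 0 < p) (ha : 0 < a) (ht : 0 < t) :
    IntegrableOn (fun t' => p * Real.exp (-(a*(t-t'))) * t' ^ (-(1:ℝ)/2)) (Ioo 0 t) := by
  apply Integrable.mono' ((integrableOn_rpow_neg_half t ht).const_mul p)
    ((inner_cont hp ht).aestronglyMeasurable measurableSet_Ioo)
  rw [ae_restrict_iff' measurableSet_Ioo]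
  refine ae_of_all _ fun x hx => ?_
  have h1 : (0:ℝ) ≤ x ^ (-(1:ℝ)/2) := Real.rpow_nonneg hx.1.le _
  have h2 : Real.exp (-(a*(t-x))) ≤ 1 ∨ True := Or.inr trivial
  rw [Real.norm_eq_abs, abs_of_nonneg (by positivity)]
  calc p * Real.exp (-(a*(t-x))) * x ^ (-(1:ℝ)/2)
      ≤ p * 1 * x ^ (-(1:ℝ)/2) := by
        apply mul_le_mul_of_nonneg_right _ h1
        exact mul_le_mul_of_nonneg_left (Real.exp_le_one_iff.mpr (by nlinarith [hx.2, hx.1, ha])) hp.le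
    _ = p * x ^ (-(1:ℝ)/2) := by ring

lemma inner_boundA (hp : 0 < p) (ha : 0 < a) (ht : 0 < t) :
    (∫ t' in Ioo (0:ℝ) t, p * Real.exp (-(a*(t-t'))) * t' ^ (-(1:ℝ)/2))
      ≤ 2 * p * Real.sqrt t := by
  have h := integral_mono_of_nonneg (μ := volume.restrict (Ioo (0:ℝ) t))
    (f := fun t' => p * Real.exp (-(a*(t-t'))) * t' ^ (-(1:ℝ)/2))
    (g := fun t' => p * t' ^ (-(1:ℝ)/2))
    ?_ ((integrableOn_rpow_neg_half t ht).const_mul p) ?_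
  · calc _ ≤ ∫ t' in Ioo (0:ℝ) t, p * t' ^ (-(1:ℝ)/2) := h
      _ = p * ∫ t' in Ioo (0:ℝ) t, t' ^ (-(1:ℝ)/2) := by rw [integral_const_mul]
      _ = 2 * p * Real.sqrt t := by rw [integral_rpow_neg_half t ht]; ring
  · filter_upwards [ae_restrict_mem measurableSet_Ioo] with x hx
    have := Real.rpow_nonneg hx.1.le (-(1:ℝ)/2)
    positivity
  · filter_upwards [ae_restrict_mem measurableSet_Ioo] with x hx
    have h1 : (0:ℝ) ≤ x ^ (-(1:ℝ)/2) := Real.rpow_nonneg hx.1.le _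
    calc p * Real.exp (-(a*(t-x))) * x ^ (-(1:ℝ)/2)
        ≤ p * 1 * x ^ (-(1:ℝ)/2) := by
          apply mul_le_mul_of_nonneg_right _ h1
          exact mul_le_mul_of_nonneg_left
            (Real.exp_le_one_iff.mpr (by nlinarith [hx.2, hx.1, ha])) hp.le
      _ = p * x ^ (-(1:ℝ)/2) := by ring

lemma exp_integral_piece (ha : 0 < a) (ht : 0 < t) :
    ∫ x in Ico (t/2) t, Real.exp (-(a*(t-x))) ≤ a⁻¹ := by
  rw [integral_Ico_eq_integral_Ioo, ← integral_Ioc_eq_integral_Ioo,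
    ← intervalIntegral.integral_of_le (by linarith)]
  rw [intervalIntegral.integral_comp_sub_left (fun u => Real.exp (-(a*u))) t]
  rw [sub_self, show t - t/2 = t/2 by ring]
  rw [intervalIntegral.integral_comp_mul_left (fun u => Real.exp (-u)) ha.ne']
  rw [mul_zero, intervalIntegral.integral_comp_neg (fun u => Real.exp u), neg_zero,
    integral_exp, smul_eq_mul, Real.exp_zero]
  have h1 : 0 < Real.exp (-(a * (t/2))) := Real.exp_pos _
  have h2 : (0:ℝ) < a⁻¹ := by positivity
  nlinarith

lemma inner_boundB (hp : 0 < p) (ha : 0 < a) (ht : 0 < t) :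
    (∫ t' in Ioo (0:ℝ) t, p * Real.exp (-(a*(t-t'))) * t' ^ (-(1:ℝ)/2))
      ≤ 3 * Real.sqrt 2 * p / (a * Real.sqrt t) := by
  set f : ℝ → ℝ := fun t' => p * Real.exp (-(a*(t-t'))) * t' ^ (-(1:ℝ)/2) with hf
  have ht2 : (0:ℝ) < t/2 := half_pos ht
  have hsplit : Ioo (0:ℝ) t = Ioo 0 (t/2) ∪ Ico (t/2) t :=
    (Ioo_union_Ico_eq_Ioo ht2 (by linarith)).symm
  have hdisj : Disjoint (Ioo (0:ℝ) (t/2)) (Ico (t/2) t) := by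
    rw [Set.disjoint_left]; rintro x ⟨_, h2⟩ ⟨h3, _⟩; exact absurd h3 (not_le.mpr h2)
  have hint : IntegrableOn f (Ioo 0 t) := inner_integrable hp ha ht
  have hint1 : IntegrableOn f (Ioo 0 (t/2)) :=
    hint.mono_set (by rw [hsplit]; exact subset_union_left)
  have hint2 : IntegrableOn f (Ico (t/2) t) :=
    hint.mono_set (by rw [hsplit]; exact subset_union_right)
  rw [hsplit, setIntegral_union hdisj measurableSet_Ico hint1 hint2]
  -- piece 1
  have hP1 : (∫ x in Ioo (0:ℝ) (t/2), f x)
      ≤ (p * Real.exp (-(a*(t/2)))) * (2 * Real.sqrt (t/2)) := by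
    have h := integral_mono_of_nonneg (μ := volume.restrict (Ioo (0:ℝ) (t/2)))
      (f := f) (g := fun x => (p * Real.exp (-(a*(t/2)))) * x ^ (-(1:ℝ)/2)) ?_
      ((integrableOn_rpow_neg_half (t/2) ht2).const_mul _) ?_
    · calc (∫ x in Ioo (0:ℝ) (t/2), f x)
          ≤ ∫ x in Ioo (0:ℝ) (t/2), (p * Real.exp (-(a*(t/2)))) * x ^ (-(1:ℝ)/2) := h
        _ = (p * Real.exp (-(a*(t/2)))) * (2 * Real.sqrt (t/2)) := by
            rw [integral_const_mul, integral_rpow_neg_half (t/2) ht2]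
    · filter_upwards [ae_restrict_mem measurableSet_Ioo] with x hx
      have := Real.rpow_nonneg hx.1.le (-(1:ℝ)/2)
      simp only [hf]; positivity
    · filter_upwards [ae_restrict_mem measurableSet_Ioo] with x hx
      have h1 : (0:ℝ) ≤ x ^ (-(1:ℝ)/2) := Real.rpow_nonneg hx.1.le _
      apply mul_le_mul_of_nonneg_right _ h1
      exact mul_le_mul_of_nonneg_left
        (Real.exp_le_exp.mpr (by nlinarith [hx.2])) hp.le
  -- piece 2
  have hP2 : (∫ x in Ico (t/2) t, f x) ≤ p * (Real.sqrt (t/2))⁻¹ * a⁻¹ := by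
    have hg2 : IntegrableOn (fun x => (p * (Real.sqrt (t/2))⁻¹) * Real.exp (-(a*(t-x))))
        (Ico (t/2) t) := by
      exact ((by fun_prop : Continuous fun x : ℝ =>
        (p * (Real.sqrt (t/2))⁻¹) * Real.exp (-(a*(t-x)))).integrableOn_Icc).mono_set
        Ico_subset_Icc_self
    have h := integral_mono_of_nonneg (μ := volume.restrict (Ico (t/2) t))
      (f := f) (g := fun x => (p * (Real.sqrt (t/2))⁻¹) * Real.exp (-(a*(t-x)))) ?_ hg2 ?_
    · calc (∫ x in Ico (t/2) t, f x)
          ≤ ∫ x in Ico (t/2) t, (p * (Real.sqrt (t/2))⁻¹) * Real.exp (-(a*(t-x))) := h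
        _ = (p * (Real.sqrt (t/2))⁻¹) * ∫ x in Ico (t/2) t, Real.exp (-(a*(t-x))) :=
            integral_const_mul _ _
        _ ≤ (p * (Real.sqrt (t/2))⁻¹) * a⁻¹ := by
            apply mul_le_mul_of_nonneg_left (exp_integral_piece ha ht)
            positivity
        _ = p * (Real.sqrt (t/2))⁻¹ * a⁻¹ := by ring
    · filter_upwards [ae_restrict_mem measurableSet_Ico] with x hx
      have h0 : (0:ℝ) < x := lt_of_lt_of_le ht2 hx.1
      have := Real.rpow_nonneg h0.le (-(1:ℝ)/2)
      simp only [hf]; positivity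
    · filter_upwards [ae_restrict_mem measurableSet_Ico] with x hx
      have h0 : (0:ℝ) < x := lt_of_lt_of_le ht2 hx.1
      have hxr : x ^ (-(1:ℝ)/2) ≤ (Real.sqrt (t/2))⁻¹ := by
        rw [rpow_neg_half x h0]
        exact inv_anti₀ (Real.sqrt_pos.mpr ht2) (Real.sqrt_le_sqrt hx.1)
      calc p * Real.exp (-(a*(t-x))) * x ^ (-(1:ℝ)/2)
          ≤ (p * Real.exp (-(a*(t-x)))) * (Real.sqrt (t/2))⁻¹ :=
            mul_le_mul_of_nonneg_left hxr (by positivity)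
        _ = (p * (Real.sqrt (t/2))⁻¹) * Real.exp (-(a*(t-x))) := by ring
  -- combine
  have hs : Real.sqrt t * Real.sqrt t = t := Real.mul_self_sqrt ht.le
  have hs2 : Real.sqrt 2 * Real.sqrt 2 = 2 := Real.mul_self_sqrt (by norm_num)
  have hspos : 0 < Real.sqrt t := Real.sqrt_pos.mpr ht
  have hs2pos : 0 < Real.sqrt 2 := Real.sqrt_pos.mpr (by norm_num)
  have hhalf : Real.sqrt (t/2) = Real.sqrt t / Real.sqrt 2 := by
    rw [Real.sqrt_div ht.le]
  have hexp : Real.exp (-(a*(t/2))) ≤ 2/(a*t) := by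
    have h := Real.add_one_le_exp (a*(t/2))
    rw [Real.exp_neg]
    have h2 : a*t/2 ≤ Real.exp (a*(t/2)) := by nlinarith
    have h3 : (Real.exp (a*(t/2)))⁻¹ ≤ (a*t/2)⁻¹ := inv_anti₀ (by positivity) h2
    calc (Real.exp (a*(t/2)))⁻¹ ≤ (a*t/2)⁻¹ := h3
      _ = 2/(a*t) := by field_simp
  calc (∫ x in Ioo (0:ℝ) (t/2), f x) + ∫ x in Ico (t/2) t, f x
      ≤ (p * (2/(a*t))) * (2 * Real.sqrt (t/2)) + p * (Real.sqrt (t/2))⁻¹ * a⁻¹ := by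
        apply add_le_add _ hP2
        refine le_trans hP1 ?_
        apply mul_le_mul_of_nonneg_right _ (by positivity)
        exact mul_le_mul_of_nonneg_left hexp hp.le
    _ = 3 * Real.sqrt 2 * p / (a * Real.sqrt t) := by
        rw [hhalf]
        field_simp
        linear_combination 4 * hs - 2 * t * hs2

end Inner

lemma key_bound {p a : ℝ} (hp : 0 < p) (ha : 0 < a) :
    ∫ t in Ioi (0:ℝ),
        (∫ t' in Ioo (0:ℝ) t, p * Real.exp (-(a*(t-t'))) * t' ^ (-(1:ℝ)/2)) ^ 4
      ≤ 144 * Real.sqrt 2 * p^4 / a^3 := by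
  have hs2 : Real.sqrt 2 * Real.sqrt 2 = 2 := Real.mul_self_sqrt (by norm_num)
  have hs2pos : 0 < Real.sqrt 2 := Real.sqrt_pos.mpr (by norm_num)
  set q : ℝ := 3 * Real.sqrt 2 * p / a with hq
  set T : ℝ := 3 * Real.sqrt 2 / (2*a) with hT
  have hqpos : 0 < q := by positivity
  have hTpos : 0 < T := by positivity
  set G : ℝ → ℝ := fun t => min (2*p*Real.sqrt t) (q / Real.sqrt t) with hG
  -- measurability
  have hGmeas : Measurable fun t => (G t)^4 := by
    apply Measurable.pow_const
    exact Measurable.min (by fun_prop) (measurable_const.div Real.continuous_sqrt.measurable)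
  -- majorant on Ioc 0 T
  have hA4int : IntegrableOn (fun t : ℝ => 16*p^4*t^2) (Ioc 0 T) :=
    (by fun_prop : Continuous fun t : ℝ => 16*p^4*t^2).integrableOn_Ioc
  have hGA : ∀ t ∈ Ioc (0:ℝ) T, (G t)^4 ≤ 16*p^4*t^2 := by
    intro t ht
    have h1 : (G t)^4 ≤ (2*p*Real.sqrt t)^4 := by
      apply pow_le_pow_left₀ _ (min_le_left _ _)
      exact le_min (by positivity) (by positivity)
    refine h1.trans (le_of_eq ?_)
    have : Real.sqrt t ^ 4 = t^2 := by
      rw [show (4:ℕ) = 2*2 by norm_num, pow_mul, Real.sq_sqrt ht.1.le]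
    rw [mul_pow, this]; ring
  have hGint1 : IntegrableOn (fun t => (G t)^4) (Ioc 0 T) := by
    apply Integrable.mono' hA4int hGmeas.aestronglyMeasurable.restrict
    filter_upwards [ae_restrict_mem measurableSet_Ioc] with t ht
    rw [Real.norm_eq_abs, abs_of_nonneg (by positivity)]
    exact hGA t ht
  -- majorant on Ioi T
  have hB4int : IntegrableOn (fun t : ℝ => q^4 * t^(-2:ℝ)) (Ioi T) :=
    (integrableOn_Ioi_rpow_of_lt (by norm_num) hTpos).const_mul _
  have hGB : ∀ t ∈ Ioi T, (G t)^4 ≤ q^4 * t^(-2:ℝ) := by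
    intro t ht
    have htpos : 0 < t := hTpos.trans ht
    have h1 : (G t)^4 ≤ (q / Real.sqrt t)^4 := by
      apply pow_le_pow_left₀ _ (min_le_right _ _)
      exact le_min (by positivity) (by positivity)
    refine h1.trans (le_of_eq ?_)
    have h2 : Real.sqrt t ^ 4 = t^2 := by
      rw [show (4:ℕ) = 2*2 by norm_num, pow_mul, Real.sq_sqrt htpos.le]
    rw [div_pow, h2, Real.rpow_neg htpos.le, show ((2:ℝ)) = ((2:ℕ):ℝ) by norm_num,
      Real.rpow_natCast]
    ring
  have hGint2 : IntegrableOn (fun t => (G t)^4) (Ioi T) := by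
    apply Integrable.mono' hB4int hGmeas.aestronglyMeasurable.restrict
    filter_upwards [ae_restrict_mem measurableSet_Ioi] with t ht
    rw [Real.norm_eq_abs, abs_of_nonneg (by positivity)]
    exact hGB t ht
  have hGint : IntegrableOn (fun t => (G t)^4) (Ioi 0) := by
    rw [← Ioc_union_Ioi_eq_Ioi hTpos.le]
    exact hGint1.union hGint2
  -- main comparison
  have hmain : (∫ t in Ioi (0:ℝ),
        (∫ t' in Ioo (0:ℝ) t, p * Real.exp (-(a*(t-t'))) * t' ^ (-(1:ℝ)/2)) ^ 4)
      ≤ ∫ t in Ioi (0:ℝ), (G t)^4 := by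
    apply integral_mono_of_nonneg _ hGint
    · filter_upwards [ae_restrict_mem measurableSet_Ioi] with t ht
      have h1 : (∫ t' in Ioo (0:ℝ) t, p * Real.exp (-(a*(t-t'))) * t' ^ (-(1:ℝ)/2)) ≤ G t := by
        apply le_min (inner_boundA hp ha ht)
        refine (inner_boundB hp ha ht).trans (le_of_eq ?_)
        rw [hq, div_div]
      exact pow_le_pow_left₀ (inner_nonneg hp) h1 4
    · filter_upwards [ae_restrict_mem measurableSet_Ioi] with t ht
      positivity
  refine hmain.trans ?_
  -- split and evaluate
  rw [← Ioc_union_Ioi_eq_Ioi hTpos.le,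
    setIntegral_union (Ioc_disjoint_Ioi le_rfl) measurableSet_Ioi hGint1 hGint2]
  have hI1 : (∫ t in Ioc (0:ℝ) T, (G t)^4) ≤ 16*p^4*T^3/3 := by
    refine (setIntegral_mono_on hGint1 hA4int measurableSet_Ioc hGA).trans (le_of_eq ?_)
    rw [← intervalIntegral.integral_of_le hTpos.le, intervalIntegral.integral_const_mul,
      integral_pow]
    norm_num
    ring
  have hI2 : (∫ t in Ioi T, (G t)^4) ≤ q^4 / T := by
    refine (setIntegral_mono_on hGint2 hB4int measurableSet_Ioi hGB).trans (le_of_eq ?_)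
    rw [integral_const_mul, integral_Ioi_rpow_of_lt (by norm_num) hTpos]
    norm_num [Real.rpow_neg_one]
    ring
  refine (add_le_add hI1 hI2).trans (le_of_eq ?_)
  rw [hq, hT]
  have e2 : Real.sqrt 2 ^ 2 = 2 := by nlinarith
  have e4 : Real.sqrt 2 ^ 4 = 4 := by nlinarith
  field_simp
  ring_nf
  rw [e2]
  ring

/-- The function `F(t) = ∫₀ᵗ 2^{3j/2} e^{-c 2^{2j}(t-t')} t'^{-1/2} dt'` satisfies
`‖F‖_{L⁴(ℝ⁺)} ≲ 1` uniformly in `j ∈ ℤ`. -/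
theorem heat_convolution_L4_bound (c : ℝ) (hc : 0 < c) :
    ∃ C : ℝ, 0 < C ∧ ∀ j : ℤ,
      (∫ t in Ioi (0 : ℝ),
          (∫ t' in Ioo (0 : ℝ) t,
            (2 : ℝ) ^ (3 * (j : ℝ) / 2) * Real.exp (-c * (2 : ℝ) ^ (2 * j) * (t - t'))
              * t' ^ (-(1 : ℝ) / 2)) ^ 4) ^ ((1 : ℝ) / 4) ≤ C := by
  have hs2pos : 0 < Real.sqrt 2 := Real.sqrt_pos.mpr (by norm_num)
  set M : ℝ := 144 * Real.sqrt 2 / c^3 with hM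
  have hMpos : 0 < M := by positivity
  refine ⟨M ^ ((1:ℝ)/4), Real.rpow_pos_of_pos hMpos _, fun j => ?_⟩
  set p : ℝ := (2:ℝ)^(3*(j:ℝ)/2) with hp
  have hppos : 0 < p := Real.rpow_pos_of_pos (by norm_num) _
  have hzpos : (0:ℝ) < (2:ℝ)^(2*j) := zpow_pos (by norm_num) _
  set a : ℝ := c * (2:ℝ)^(2*j) with ha
  have hapos : 0 < a := by positivity
  have harg : ∀ t t' : ℝ, -c * (2:ℝ)^(2*j) * (t - t') = -(a*(t-t')) := by
    intro t t'; rw [ha]; ring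
  simp only [harg]
  have hkey := key_bound hppos hapos
  have h1 : p^4 = (2:ℝ)^((6*j:ℤ)) := by
    rw [hp, ← Real.rpow_natCast ((2:ℝ)^(3*(j:ℝ)/2)) 4, ← Real.rpow_mul (by norm_num),
      show (3*(j:ℝ)/2)*(4:ℕ) = ((6*j:ℤ):ℝ) by push_cast; ring, Real.rpow_intCast]
  have h2 : a^3 = c^3 * (2:ℝ)^((6*j:ℤ)) := by
    rw [ha, mul_pow]
    congr 1
    rw [← zpow_natCast ((2:ℝ)^(2*j)) 3, ← zpow_mul, show 2*j*(3:ℕ) = 6*j by ring]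
  have hz : ((2:ℝ)^((6*j:ℤ))) ≠ 0 := (zpow_pos (by norm_num : (0:ℝ) < 2) _).ne'
  have hval : 144 * Real.sqrt 2 * p^4 / a^3 = M := by
    rw [h1, h2, hM]
    field_simp
  have hnn : 0 ≤ ∫ t in Ioi (0:ℝ),
      (∫ t' in Ioo (0:ℝ) t, p * Real.exp (-(a*(t-t'))) * t' ^ (-(1:ℝ)/2)) ^ 4 := by
    apply setIntegral_nonneg measurableSet_Ioi
    intro t ht
    positivity
  exact Real.rpow_le_rpow hnn (hval ▸ hkey) (by norm_num)
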